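/- arXiv:2412.10963 — 2 statements merged into one kernel-verified Lean document; each statement's English description precedes it below -/
import Mathlib

section
/- Let f : E ⟶ X be a bundle scenario with X connected, E partitioned into summands F^{(i)}, i ∈ Fin m (each F^{(i)} closed under the structure maps of E, levelwise pairwise disjoint with union E), and let p be a simplicial distribution on f, with component masses λ_i := Σ_{e ∈ F^{(i)}_n} p_x(e) (independent of the simplex x) and, for λ_i ≠ 0, restrictions p|_{F^{(i)}} defined by (p|_{F^{(i)}})_x(e) = p_x(e)/λ_i for e ∈ F^{(i)}_n. Then p is noncontextual if and only if p|_{F^{(i)}} is noncontextual (as a simplicial distribution on the restricted map f|_{F^{(i)}} : F^{(i)} ⟶ X) for every i with λ_i ≠ 0. -/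
open CategoryTheory Simplicial Opposite
open scoped NNReal BigOperators

universe u

/-- A distribution on a type `S`: a finitely supported function to `ℝ≥0` with total sum 1. -/
structure FDist (S : Type u) : Type u where
  toFun : S → ℝ≥0
  finite_support : (Function.support toFun).Finite
  sum_one : ∑ᶠ s, toFun s = 1

/-- `f : E ⟶ X` is a bundle scenario if it is surjective in each degree. -/
def IsBundle {E X : SSet.{u}} (f : E ⟶ X) : Prop :=
  ∀ n : ℕ, Function.Surjective (f.app (op ⦋n⦌))

/-- A simplicial distribution on a simplicial map `f : E ⟶ X`. -/
structure BDist {E X : SSet.{u}} (f : E ⟶ X) : Type u where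
  d : ∀ n : ℕ, X _⦋n⦌ → FDist (E _⦋n⦌)
  supp : ∀ (n : ℕ) (x : X _⦋n⦌) (e : E _⦋n⦌), f.app (op ⦋n⦌) e ≠ x → (d n x).toFun e = 0
  compat : ∀ {k n : ℕ} (α : (⦋k⦌ : SimplexCategory) ⟶ ⦋n⦌) (x : X _⦋n⦌) (e : E _⦋k⦌),
    (d k (X.map α.op x)).toFun e = ∑ᶠ e' ∈ {e' : E _⦋n⦌ | E.map α.op e' = e}, (d n x).toFun e'

/-- A family of levelwise subsets closed under the structure maps. -/
def ClosedUnder (E : SSet.{u}) (F : ∀ n : ℕ, Set (E _⦋n⦌)) : Prop :=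
  ∀ ⦃k n : ℕ⦄ (α : (⦋k⦌ : SimplexCategory) ⟶ ⦋n⦌) (e : E _⦋n⦌), e ∈ F n → E.map α.op e ∈ F k

/-- A summand of a simplicial set: the family and its levelwise complement are both closed
under the structure maps. -/
def IsSummand (E : SSet.{u}) (F : ∀ n : ℕ, Set (E _⦋n⦌)) : Prop :=
  ClosedUnder E F ∧ ClosedUnder E fun n => (F n)ᶜ

/-- The edge relation on vertices of a simplicial set. -/
def EdgeRel (X : SSet.{u}) (a b : X _⦋0⦌) : Prop :=
  ∃ σ : X _⦋1⦌, X.δ 1 σ = a ∧ X.δ 0 σ = b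

/-- A simplicial set is connected if any two vertices are related by the equivalence
relation generated by the edge relation. -/
def SConnected (X : SSet.{u}) : Prop :=
  ∀ a b : X _⦋0⦌, Relation.EqvGen (EdgeRel X) a b

/-- The sub-simplicial set spanned by a closed family of levelwise subsets. -/
def SubSSet (E : SSet.{u}) (F : ∀ n : ℕ, Set (E _⦋n⦌)) (hF : ClosedUnder E F) : SSet.{u} where
  obj U := {e : E.obj U // e ∈ F U.unop.len}
  map {U V} α := TypeCat.ofHom fun e =>
    ⟨E.map α e.1, hF (k := V.unop.len) (n := U.unop.len) α.unop e.1 e.2⟩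
  map_id U := by
    refine ConcreteCategory.hom_ext _ _ fun e => ?_
    exact Subtype.ext (congrArg (fun g => g e.1) (E.map_id U))
  map_comp α β := by
    refine ConcreteCategory.hom_ext _ _ fun e => ?_
    exact Subtype.ext (congrArg (fun g => g e.1) (E.map_comp α β))

/-- The inclusion of a sub-simplicial set. -/
def subIncl (E : SSet.{u}) (F : ∀ n : ℕ, Set (E _⦋n⦌)) (hF : ClosedUnder E F) :
    SubSSet E F hF ⟶ E where
  app U := TypeCat.ofHom fun e => e.1
  naturality := by intros; rfl

/-- The sections of a simplicial map `f : E ⟶ X`. -/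
def Sections {E X : SSet.{u}} (f : E ⟶ X) : Type u :=
  {s : X ⟶ E // s ≫ f = 𝟙 X}

/-- A simplicial distribution on a bundle is noncontextual if it is a mixture of
(deterministic distributions associated with) sections of the bundle. -/
def BNoncontextual {E X : SSet.{u}} {f : E ⟶ X} (p : BDist f) : Prop :=
  ∃ Q : FDist (Sections f), ∀ (n : ℕ) (x : X _⦋n⦌) (e : E _⦋n⦌),
    (p.d n x).toFun e = ∑ᶠ s ∈ setOf (fun s : Sections f => s.1.app (op ⦋n⦌) x = e), Q.toFun s

/-- A vertex (extreme point) of the convex set of simplicial distributions on a bundle. -/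
def BIsVertex {E X : SSet.{u}} {f : E ⟶ X} (p : BDist f) : Prop :=
  ∀ (q q' : BDist f) (t : ℝ), 0 < t → t < 1 →
    (∀ (n : ℕ) (x : X _⦋n⦌) (e : E _⦋n⦌),
      ((p.d n x).toFun e : ℝ) = t * ((q.d n x).toFun e : ℝ) + (1 - t) * ((q'.d n x).toFun e : ℝ)) →
    q = q'
open Function Set

section FinsumHelpers

/-- Fiberwise summation. -/
lemma fiber_finsum {S T : Type*} (Q : S → ℝ≥0) (hQ : (support Q).Finite) (g : S → T) (A : Set T) :
    ∑ᶠ e ∈ A, ∑ᶠ s ∈ {s | g s = e}, Q s = ∑ᶠ s ∈ {s | g s ∈ A}, Q s := by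
  classical
  set T0 : Finset S := hQ.toFinset with hT0
  have hmem : ∀ s, s ∈ T0 ↔ Q s ≠ 0 := fun s => hQ.mem_toFinset
  have inner : ∀ e, ∑ᶠ s ∈ {s | g s = e}, Q s = ∑ s ∈ T0.filter (fun s => g s = e), Q s := by
    intro e
    refine finsum_mem_eq_sum_of_inter_support_eq Q ?_
    ext s
    simp only [Set.mem_inter_iff, Set.mem_setOf_eq, Finset.coe_filter, mem_support, hmem]
    tauto
  have rhs : ∑ᶠ s ∈ {s | g s ∈ A}, Q s = ∑ s ∈ T0.filter (fun s => g s ∈ A), Q s := by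
    refine finsum_mem_eq_sum_of_inter_support_eq Q ?_
    ext s
    simp only [Set.mem_inter_iff, Set.mem_setOf_eq, Finset.coe_filter, mem_support, hmem]
    tauto
  set h : T → ℝ≥0 := fun e => ∑ s ∈ T0.filter (fun s => g s = e), Q s with hh
  have houter : ∑ᶠ e ∈ A, h e = ∑ e ∈ (T0.image g).filter (· ∈ A), h e := by
    refine finsum_mem_eq_sum_of_inter_support_eq h ?_
    ext e
    simp only [Set.mem_inter_iff, Finset.coe_filter, Set.mem_setOf_eq, mem_support,
      Finset.mem_image]
    constructor
    · rintro ⟨hA, hne⟩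
      obtain ⟨s, hs, hQs⟩ := Finset.exists_ne_zero_of_sum_ne_zero hne
      exact ⟨⟨⟨s, (Finset.mem_filter.mp hs).1, (Finset.mem_filter.mp hs).2⟩, hA⟩, hne⟩
    · rintro ⟨⟨_, hA⟩, hne⟩; exact ⟨hA, hne⟩
  calc ∑ᶠ e ∈ A, ∑ᶠ s ∈ {s | g s = e}, Q s
      = ∑ᶠ e ∈ A, h e := by refine finsum_mem_congr rfl fun e _ => inner e
    _ = ∑ e ∈ (T0.image g).filter (· ∈ A), h e := houter
    _ = ∑ s ∈ T0.filter (fun s => g s ∈ (T0.image g).filter (· ∈ A)), Q s :=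
        Finset.sum_fiberwise_eq_sum_filter _ _ _ _
    _ = ∑ s ∈ T0.filter (fun s => g s ∈ A), Q s := by
        apply Finset.sum_congr _ (fun _ _ => rfl)
        apply Finset.filter_congr
        intro s hs
        simp only [Finset.mem_filter, Finset.mem_image]
        exact ⟨fun ⟨_, hA⟩ => hA, fun hA => ⟨⟨s, hs, rfl⟩, hA⟩⟩
    _ = ∑ᶠ s ∈ {s | g s ∈ A}, Q s := rhs.symm

/-- Swap a finsum with a finite sum. -/
lemma finsum_finset_sum_comm {S : Type*} {ι : Type*} (t : Finset ι) (f : ι → S → ℝ≥0)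
    (hf : ∀ i ∈ t, (support (f i)).Finite) :
    ∑ᶠ s, ∑ i ∈ t, f i s = ∑ i ∈ t, ∑ᶠ s, f i s := by
  classical
  induction t using Finset.induction_on with
  | empty => simp
  | insert a t hnot ih =>
    have h1 : (support (f a)).Finite := hf a (Finset.mem_insert_self a t)
    have h2 : ∀ i ∈ t, (support (f i)).Finite := fun i hi => hf i (Finset.mem_insert_of_mem hi)
    have h3 : (support (fun s => ∑ i ∈ t, f i s)).Finite := by
      refine Set.Finite.subset (Set.finite_iUnion (fun i : t => h2 i i.2)) ?_
      intro s hs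
      simp only [mem_support] at hs
      by_contra hc
      simp only [Set.mem_iUnion, mem_support, not_exists, not_not] at hc
      exact hs (Finset.sum_eq_zero fun i hi => hc ⟨i, hi⟩)
    simp only [Finset.sum_insert hnot]
    rw [finsum_add_distrib h1 h3, ih h2]

/-- finsum over a set containing the support. -/
lemma finsum_eq_finsum_mem {S : Type*} (Q : S → ℝ≥0) (A : Set S) (h : support Q ⊆ A) :
    ∑ᶠ s, Q s = ∑ᶠ s ∈ A, Q s := by
  rw [← finsum_mem_univ]
  exact finsum_mem_inter_support_eq Q _ _ (by rw [Set.univ_inter, Set.inter_eq_self_of_subset_right h])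

lemma indicator_support_finite {S : Type*} (Q : S → ℝ≥0) (hQ : (support Q).Finite) (A : Set S) :
    (support (A.indicator Q)).Finite := by
  refine hQ.subset fun x hx => ?_
  simp only [mem_support, Set.indicator_apply_ne_zero] at hx
  exact hx.2

lemma finsum_mem_mul_left {S : Type*} (c : ℝ≥0) (Q : S → ℝ≥0) (hQ : (support Q).Finite)
    (A : Set S) : ∑ᶠ s ∈ A, c * Q s = c * ∑ᶠ s ∈ A, Q s := by
  rw [finsum_mem_def, finsum_mem_def, mul_finsum _ _]
  refine finsum_congr fun s => ?_
  by_cases hs : s ∈ A <;> simp [Set.indicator_of_mem, Set.indicator_of_notMem, hs]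

lemma single_le_finsum_mem {S : Type*} (Q : S → ℝ≥0) (hQ : (support Q).Finite)
    {A : Set S} {s : S} (hs : s ∈ A) : Q s ≤ ∑ᶠ x ∈ A, Q x := by
  rw [finsum_mem_def]
  have := single_le_finsum s (f := A.indicator Q) (indicator_support_finite Q hQ A)
    (fun j => zero_le)
  rwa [Set.indicator_of_mem hs] at this

end FinsumHelpers

section Aux

variable {E X : SSet.{0}}

/-- The component of a simplex, given a partition. -/
noncomputable def cmpnt {m : ℕ} (F : Fin m → ∀ n : ℕ, Set (E _⦋n⦌))
    (hun : ∀ n : ℕ, (⋃ i : Fin m, F i n) = Set.univ) (n : ℕ) (e : E _⦋n⦌) : Fin m :=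
  (Set.mem_iUnion.mp (by rw [hun n]; exact Set.mem_univ e : e ∈ ⋃ i, F i n)).choose

lemma mem_cmpnt {m : ℕ} (F : Fin m → ∀ n : ℕ, Set (E _⦋n⦌))
    (hun : ∀ n : ℕ, (⋃ i : Fin m, F i n) = Set.univ) (n : ℕ) (e : E _⦋n⦌) :
    e ∈ F (cmpnt F hun n e) n :=
  (Set.mem_iUnion.mp (by rw [hun n]; exact Set.mem_univ e : e ∈ ⋃ i, F i n)).choose_spec

lemma cmpnt_eq {m : ℕ} {F : Fin m → ∀ n : ℕ, Set (E _⦋n⦌)}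
    (hdisj : ∀ n : ℕ, Pairwise fun i j : Fin m => Disjoint (F i n) (F j n))
    (hun : ∀ n : ℕ, (⋃ i : Fin m, F i n) = Set.univ) {n : ℕ} {e : E _⦋n⦌} {i : Fin m}
    (he : e ∈ F i n) : cmpnt F hun n e = i := by
  by_contra hne
  exact (hdisj n hne).le_bot ⟨mem_cmpnt F hun n e, he⟩ 

lemma cmpnt_map {m : ℕ} {F : Fin m → ∀ n : ℕ, Set (E _⦋n⦌)}
    (hcl : ∀ i : Fin m, ClosedUnder E (F i))
    (hdisj : ∀ n : ℕ, Pairwise fun i j : Fin m => Disjoint (F i n) (F j n))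
    (hun : ∀ n : ℕ, (⋃ i : Fin m, F i n) = Set.univ)
    {k n : ℕ} (α : (⦋k⦌ : SimplexCategory) ⟶ ⦋n⦌) (e : E _⦋n⦌) :
    cmpnt F hun k (E.map α.op e) = cmpnt F hun n e :=
  cmpnt_eq hdisj hun (hcl _ α e (mem_cmpnt F hun n e))

/-- Vertices of a simplicial map have constant component when `X` is connected. -/
lemma vert_comp {m : ℕ} {F : Fin m → ∀ n : ℕ, Set (E _⦋n⦌)}
    (hcl : ∀ i : Fin m, ClosedUnder E (F i))
    (hdisj : ∀ n : ℕ, Pairwise fun i j : Fin m => Disjoint (F i n) (F j n))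
    (hun : ∀ n : ℕ, (⋃ i : Fin m, F i n) = Set.univ)
    (hX : SConnected X) (s : X ⟶ E) (a b : X _⦋0⦌) :
    cmpnt F hun 0 (s.app (Opposite.op ⦋0⦌) a) = cmpnt F hun 0 (s.app (Opposite.op ⦋0⦌) b) := by
  have key : ∀ a b : X _⦋0⦌, EdgeRel X a b →
      cmpnt F hun 0 (s.app (Opposite.op ⦋0⦌) a) = cmpnt F hun 0 (s.app (Opposite.op ⦋0⦌) b) := by
    rintro a b ⟨σ, ha, hb⟩
    have h1 : s.app (Opposite.op ⦋0⦌) a = E.map (SimplexCategory.δ 1).op (s.app (Opposite.op ⦋1⦌) σ) := by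
      rw [← ha]
      exact (FunctorToTypes.naturality s (SimplexCategory.δ 1).op σ)
    have h0 : s.app (Opposite.op ⦋0⦌) b = E.map (SimplexCategory.δ 0).op (s.app (Opposite.op ⦋1⦌) σ) := by
      rw [← hb]
      exact (FunctorToTypes.naturality s (SimplexCategory.δ 0).op σ)
    rw [h1, h0, cmpnt_map hcl hdisj hun, cmpnt_map hcl hdisj hun]
  induction hX a b with
  | rel a b h => exact key a b h
  | refl => rfl
  | symm _ _ _ ih => exact ih.symm
  | trans _ _ _ _ _ ih1 ih2 => exact ih1.trans ih2

/-- Every simplex in the image of a simplicial map has the component of the image of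
any base vertex. -/
lemma simplex_comp {m : ℕ} {F : Fin m → ∀ n : ℕ, Set (E _⦋n⦌)}
    (hcl : ∀ i : Fin m, ClosedUnder E (F i))
    (hdisj : ∀ n : ℕ, Pairwise fun i j : Fin m => Disjoint (F i n) (F j n))
    (hun : ∀ n : ℕ, (⋃ i : Fin m, F i n) = Set.univ)
    (hX : SConnected X) (s : X ⟶ E) (x0 : X _⦋0⦌) (n : ℕ) (x : X _⦋n⦌) :
    cmpnt F hun n (s.app (Opposite.op ⦋n⦌) x) = cmpnt F hun 0 (s.app (Opposite.op ⦋0⦌) x0) := by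
  have v : (⦋0⦌ : SimplexCategory) ⟶ ⦋n⦌ := SimplexCategory.const ⦋0⦌ ⦋n⦌ 0
  calc cmpnt F hun n (s.app (Opposite.op ⦋n⦌) x)
      = cmpnt F hun 0 (E.map v.op (s.app (Opposite.op ⦋n⦌) x)) :=
        (cmpnt_map hcl hdisj hun v _).symm
    _ = cmpnt F hun 0 (s.app (Opposite.op ⦋0⦌) (X.map v.op x)) :=
        congrArg (cmpnt F hun 0) (FunctorToTypes.naturality s v.op x).symm
    _ = cmpnt F hun 0 (s.app (Opposite.op ⦋0⦌) x0) :=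
        vert_comp hcl hdisj hun hX s _ x0

/-- Include a section of the restricted bundle as a section of the original bundle. -/
def inclSec (f : E ⟶ X) (Fi : ∀ n : ℕ, Set (E _⦋n⦌)) (cl : ClosedUnder E Fi) :
    Sections (subIncl E Fi cl ≫ f) → Sections f :=
  fun t => ⟨t.1 ≫ subIncl E Fi cl, by rw [Category.assoc]; exact t.2⟩

lemma inclSec_app (f : E ⟶ X) (Fi : ∀ n : ℕ, Set (E _⦋n⦌)) (cl : ClosedUnder E Fi)
    (t : Sections (subIncl E Fi cl ≫ f)) (U : SimplexCategoryᵒᵖ) (x : X.obj U) :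
    (inclSec f Fi cl t).1.app U x = (t.1.app U x).1 := rfl

lemma inclSec_injective (f : E ⟶ X) (Fi : ∀ n : ℕ, Set (E _⦋n⦌)) (cl : ClosedUnder E Fi) :
    Function.Injective (inclSec f Fi cl) := by
  intro t t' h
  refine Subtype.ext (NatTrans.ext (funext fun U => ConcreteCategory.hom_ext _ _ fun x => Subtype.ext ?_))
  exact congr_arg (fun φ : X ⟶ E => φ.app U x) (congrArg Subtype.val h)

/-- Restrict a section whose image lies in the subcomplex. -/
def restrictSec (f : E ⟶ X) (Fi : ∀ n : ℕ, Set (E _⦋n⦌)) (cl : ClosedUnder E Fi)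
    (s : Sections f) (h : ∀ (U : SimplexCategoryᵒᵖ) (x : X.obj U), s.1.app U x ∈ Fi U.unop.len) :
    Sections (subIncl E Fi cl ≫ f) :=
  ⟨{ app := fun U => TypeCat.ofHom fun x => ⟨s.1.app U x, h U x⟩
     naturality := fun U V g => by
       refine ConcreteCategory.hom_ext _ _ fun x => Subtype.ext ?_
       exact FunctorToTypes.naturality s.1 g x },
   by
     refine NatTrans.ext (funext fun U => ConcreteCategory.hom_ext _ _ fun x => ?_)
     exact congr_arg (fun φ : X ⟶ X => φ.app U x) s.2⟩

lemma inclSec_restrictSec (f : E ⟶ X) (Fi : ∀ n : ℕ, Set (E _⦋n⦌)) (cl : ClosedUnder E Fi)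
    (s : Sections f) (h : ∀ (U : SimplexCategoryᵒᵖ) (x : X.obj U), s.1.app U x ∈ Fi U.unop.len) :
    inclSec f Fi cl (restrictSec f Fi cl s h) = s := by
  refine Subtype.ext (NatTrans.ext (funext fun U => ConcreteCategory.hom_ext _ _ fun x => rfl))

/-- Any bundle over an empty `X` carries only noncontextual distributions. -/
lemma emptyNC {E X : SSet.{0}} (f : E ⟶ X) (h : IsEmpty (X _⦋0⦌)) (p : BDist f) :
    BNoncontextual p := by
  have hU : ∀ U : SimplexCategoryᵒᵖ, IsEmpty (X.obj U) := by
    intro U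
    refine ⟨fun x => ?_⟩
    exact h.elim (X.map (SimplexCategory.const ⦋0⦌ U.unop 0).op x)
  have s : Sections f :=
    ⟨{ app := fun U => TypeCat.ofHom fun x => (hU U).elim x
       naturality := fun U V g => ConcreteCategory.hom_ext _ _ fun x => (hU U).elim x },
     NatTrans.ext (funext fun U => ConcreteCategory.hom_ext _ _ fun x => (hU U).elim x)⟩
  have hsub : Subsingleton (Sections f) := by
    refine ⟨fun a b => Subtype.ext (NatTrans.ext (funext fun U => ConcreteCategory.hom_ext _ _ fun x => (hU U).elim x))⟩
  haveI := hsub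
  haveI : Unique (Sections f) := uniqueOfSubsingleton s
  refine ⟨⟨fun _ => 1, Set.toFinite _, by rw [finsum_unique]⟩, fun n x e => (hU _).elim x⟩

end Aux

/-- Corollary 3.19: for a bundle scenario over a connected measurement space whose event
space is partitioned into summands, a simplicial distribution is noncontextual if and only
if each of its (normalized) restrictions to the summands with nonzero mass is
noncontextual. -/
theorem stmt6 {E X : SSet.{0}} (f : E ⟶ X) (hf : IsBundle f) (hX : SConnected X)
    (m : ℕ) (F : Fin m → ∀ n : ℕ, Set (E _⦋n⦌))
    (hcl : ∀ i : Fin m, ClosedUnder E (F i))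
    (hdisj : ∀ n : ℕ, Pairwise fun i j : Fin m => Disjoint (F i n) (F j n))
    (hun : ∀ n : ℕ, (⋃ i : Fin m, F i n) = Set.univ)
    (p : BDist f) (lam : Fin m → ℝ≥0)
    (hlam : ∀ (i : Fin m) (n : ℕ) (x : X _⦋n⦌), ∑ᶠ e ∈ F i n, (p.d n x).toFun e = lam i)
    (pc : (i : Fin m) → lam i ≠ 0 → BDist (subIncl E (F i) (hcl i) ≫ f))
    (hpc : ∀ (i : Fin m) (hi : lam i ≠ 0) (n : ℕ) (x : X _⦋n⦌) (e : E _⦋n⦌) (he : e ∈ F i n),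
      ((pc i hi).d n x).toFun ⟨e, he⟩ = (p.d n x).toFun e / lam i) :
    BNoncontextual p ↔ ∀ (i : Fin m) (hi : lam i ≠ 0), BNoncontextual (pc i hi) := by
  classical
  rcases isEmpty_or_nonempty (X _⦋0⦌) with hemp | hne
  · exact ⟨fun _ i hi => emptyNC _ hemp _, fun _ => emptyNC f hemp p⟩
  obtain ⟨x0⟩ := hne
  -- main case: X has a vertex x0
  set sC : Sections f → Fin m := fun s => cmpnt F hun 0 (s.1.app (Opposite.op ⦋0⦌) x0)
    with hsC_def
  have sec_mem : ∀ (s : Sections f) (U : SimplexCategoryᵒᵖ) (x : X.obj U),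
      s.1.app U x ∈ F (sC s) U.unop.len := by
    intro s U x
    have h := simplex_comp hcl hdisj hun hX s.1 x0 U.unop.len x
    simp only [hsC_def]
    rw [← h]
    exact mem_cmpnt F hun U.unop.len (s.1.app U x)
  have sC_of_mem : ∀ (s : Sections f) (n : ℕ) (x : X _⦋n⦌) (i : Fin m),
      s.1.app (Opposite.op ⦋n⦌) x ∈ F i n → sC s = i := by
    intro s n x i hm
    have h := simplex_comp hcl hdisj hun hX s.1 x0 n x
    simp only [hsC_def]
    rw [← h]
    exact cmpnt_eq hdisj hun hm
  have mem_range_of_sC : ∀ (i : Fin m) (s : Sections f), sC s = i →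
      ∃ t, inclSec f (F i) (hcl i) t = s := by
    intro i s h
    exact ⟨restrictSec f (F i) (hcl i) s (fun U x => h ▸ sec_mem s U x),
      inclSec_restrictSec f (F i) (hcl i) s _⟩
  have sC_incl : ∀ (i : Fin m) (t : Sections (subIncl E (F i) (hcl i) ≫ f)),
      sC (inclSec f (F i) (hcl i) t) = i := by
    intro i t
    exact cmpnt_eq hdisj hun (t.1.app (Opposite.op ⦋0⦌) x0).2
  have p_le_lam : ∀ (n : ℕ) (x : X _⦋n⦌) (e : E _⦋n⦌),
      (p.d n x).toFun e ≤ lam (cmpnt F hun n e) := by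
    intro n x e
    rw [← hlam (cmpnt F hun n e) n x]
    exact single_le_finsum_mem _ (p.d n x).finite_support (mem_cmpnt F hun n e)
  have lam_sum : ∑ i : Fin m, lam i = 1 := by
    have hfin := (p.d 0 x0).finite_support
    have hlam' : ∀ i : Fin m, lam i =
        ∑ e ∈ hfin.toFinset.filter (fun e => cmpnt F hun 0 e = i), (p.d 0 x0).toFun e := by
      intro i
      rw [← hlam i 0 x0]
      refine finsum_mem_eq_sum_of_inter_support_eq _ ?_
      ext e
      simp only [Set.mem_inter_iff, Finset.coe_filter, Set.mem_setOf_eq, mem_support,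
        hfin.mem_toFinset]
      constructor
      · rintro ⟨hm, hne⟩; exact ⟨⟨hne, cmpnt_eq hdisj hun hm⟩, hne⟩
      · rintro ⟨⟨_, hc⟩, hne⟩; exact ⟨hc ▸ mem_cmpnt F hun 0 e, hne⟩
    calc ∑ i : Fin m, lam i
        = ∑ i ∈ Finset.univ, ∑ e ∈ hfin.toFinset.filter (fun e => cmpnt F hun 0 e = i),
            (p.d 0 x0).toFun e := Finset.sum_congr rfl (fun i _ => hlam' i)
      _ = ∑ e ∈ hfin.toFinset.filter (fun e => cmpnt F hun 0 e ∈ Finset.univ),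
            (p.d 0 x0).toFun e := Finset.sum_fiberwise_eq_sum_filter _ _ _ _
      _ = ∑ e ∈ hfin.toFinset, (p.d 0 x0).toFun e := by
            rw [Finset.filter_true_of_mem (fun _ _ => Finset.mem_univ _)]
      _ = ∑ᶠ e, (p.d 0 x0).toFun e := (finsum_eq_sum _ hfin).symm
      _ = 1 := (p.d 0 x0).sum_one
  constructor
  · -- forward
    intro hNC i hi
    obtain ⟨Q, hQ⟩ := hNC
    set ι := inclSec f (F i) (hcl i) with hι
    have hinj : Function.Injective ι := inclSec_injective f (F i) (hcl i)
    have hsupp : (support fun t => Q.toFun (ι t)).Finite := by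
      have : (support fun t => Q.toFun (ι t)) = ι ⁻¹' (support Q.toFun) := rfl
      rw [this]
      exact Q.finite_support.preimage hinj.injOn
    have hrange : Set.range ι = setOf (fun s : Sections f => sC s = i) := by
      ext s
      constructor
      · rintro ⟨t, rfl⟩; exact sC_incl i t
      · intro h; exact mem_range_of_sC i s h
    have hmass : ∑ᶠ s ∈ setOf (fun s : Sections f => sC s = i), Q.toFun s = lam i := by
      have h1 : lam i = ∑ᶠ e ∈ F i 0, (p.d 0 x0).toFun e := (hlam i 0 x0).symm
      rw [h1, finsum_mem_congr rfl (fun e (_ : e ∈ F i 0) => hQ 0 x0 e)]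
      refine Eq.trans ?_ (fiber_finsum (S := Sections f) (T := E _⦋0⦌) Q.toFun Q.finite_support (fun s => s.1.app (Opposite.op ⦋0⦌) x0) (F i 0)).symm
      refine finsum_mem_congr ?_ (fun _ _ => rfl)
      ext s
      simp only [Set.mem_setOf_eq]
      constructor
      · intro h; rw [← h]; exact sec_mem s (Opposite.op ⦋0⦌) x0
      · intro h; exact sC_of_mem s 0 x0 i h
    have htot : ∑ᶠ t, Q.toFun (ι t) = lam i := by
      rw [← finsum_mem_range hinj, hrange, hmass]
    refine ⟨⟨fun t => (lam i)⁻¹ * Q.toFun (ι t), ?_, ?_⟩, ?_⟩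
    · refine hsupp.subset fun t ht => ?_
      simp only [mem_support] at ht ⊢
      intro h0; exact ht (by rw [h0, mul_zero])
    · beta_reduce
      rw [← mul_finsum _ _, htot, inv_mul_cancel₀ hi]
    · intro n x e'
      have hdef : ((pc i hi).d n x).toFun e' = (p.d n x).toFun e'.1 / lam i :=
        hpc i hi n x e'.1 e'.2
      have himage : setOf (fun s : Sections f => s.1.app (Opposite.op ⦋n⦌) x = e'.1) =
          ι '' {t | t.1.app (Opposite.op ⦋n⦌) x = e'} := by
        ext s
        constructor
        · intro hs
          have hm : s.1.app (Opposite.op ⦋n⦌) x ∈ F i n := by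
            rw [hs]; exact e'.2
          obtain ⟨t, rfl⟩ := mem_range_of_sC i s (sC_of_mem s n x i hm)
          exact ⟨t, Subtype.ext hs, rfl⟩
        · rintro ⟨t, ht, rfl⟩
          exact congrArg Subtype.val ht
      calc ((pc i hi).d n x).toFun e'
          = (lam i)⁻¹ * (p.d n x).toFun e'.1 := by
            rw [hdef, div_eq_mul_inv, mul_comm]
        _ = (lam i)⁻¹ * ∑ᶠ s ∈ setOf (fun s : Sections f => s.1.app (Opposite.op ⦋n⦌) x = e'.1),
              Q.toFun s := by rw [← hQ n x e'.1]
        _ = (lam i)⁻¹ * ∑ᶠ t ∈ {t | t.1.app (Opposite.op ⦋n⦌) x = e'}, Q.toFun (ι t) := by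
            rw [himage, finsum_mem_image hinj.injOn]
        _ = ∑ᶠ t ∈ {t | t.1.app (Opposite.op ⦋n⦌) x = e'}, (lam i)⁻¹ * Q.toFun (ι t) :=
            (finsum_mem_mul_left _ _ hsupp _).symm
  · -- backward
    intro h
    have h' : ∀ (i : Fin m) (hi : lam i ≠ 0),
        ∃ Q : FDist (Sections (subIncl E (F i) (hcl i) ≫ f)),
          ∀ (n : ℕ) (x : X _⦋n⦌) (e : (SubSSet E (F i) (hcl i)) _⦋n⦌),
            ((pc i hi).d n x).toFun e =
              ∑ᶠ s ∈ setOf (fun s : Sections (subIncl E (F i) (hcl i) ≫ f) =>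
                s.1.app (Opposite.op ⦋n⦌) x = e), Q.toFun s := h
    choose Qc hQc using h'
    set ι : ∀ i : Fin m, Sections (subIncl E (F i) (hcl i) ≫ f) → Sections f :=
      fun i => inclSec f (F i) (hcl i) with hιdef
    have hinj : ∀ i, Function.Injective (ι i) := fun i => inclSec_injective f (F i) (hcl i)
    set aux : Fin m → Sections f → ℝ≥0 := fun i =>
      if hi : lam i ≠ 0 then Function.extend (ι i) (fun t => lam i * (Qc i hi).toFun t) 0
      else 0 with haux_def
    have aux_incl : ∀ (i : Fin m) (hi : lam i ≠ 0) t,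
        aux i (ι i t) = lam i * (Qc i hi).toFun t := by
      intro i hi t
      have h1 : aux i = Function.extend (ι i) (fun t => lam i * (Qc i hi).toFun t) 0 := by
        rw [haux_def]; exact dif_pos hi
      rw [h1, Function.Injective.extend_apply (hinj i)]
    have aux_ne : ∀ (i : Fin m) (s : Sections f), sC s ≠ i → aux i s = 0 := by
      intro i s hne
      by_cases hi : lam i ≠ 0
      · have h1 : aux i = Function.extend (ι i) (fun t => lam i * (Qc i hi).toFun t) 0 := by
          rw [haux_def]; exact dif_pos hi
        rw [h1, Function.extend_apply']
        · rfl
        · rintro ⟨t, rfl⟩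
          exact hne (sC_incl i t)
      · have h1 : aux i = 0 := by rw [haux_def]; exact dif_neg hi
        rw [h1]; rfl
    have aux_supp : ∀ i : Fin m, (support (aux i)).Finite := by
      intro i
      by_cases hi : lam i ≠ 0
      · have h1 : aux i = Function.extend (ι i) (fun t => lam i * (Qc i hi).toFun t) 0 := by
          rw [haux_def]; exact dif_pos hi
        refine Set.Finite.subset ((Qc i hi).finite_support.image (ι i)) ?_
        intro s hs
        simp only [mem_support, h1] at hs
        by_cases hr : ∃ t, ι i t = s
        · obtain ⟨t, rfl⟩ := hr
          rw [Function.Injective.extend_apply (hinj i)] at hs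
          exact ⟨t, fun h0 => hs (by rw [h0, mul_zero]), rfl⟩
        · exact absurd (Function.extend_apply' _ _ _ hr) hs
      · have h1 : aux i = 0 := by rw [haux_def]; exact dif_neg hi
        rw [h1]
        simp
    have aux_sum : ∀ i : Fin m, ∑ᶠ s, aux i s = lam i := by
      intro i
      by_cases hi : lam i ≠ 0
      · have h1 : aux i = Function.extend (ι i) (fun t => lam i * (Qc i hi).toFun t) 0 := by
          rw [haux_def]; exact dif_pos hi
        have hsub : support (aux i) ⊆ Set.range (ι i) := by
          intro s hs
          simp only [mem_support, h1] at hs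
          by_contra hr
          exact hs (by rw [Function.extend_apply' _ _ _ (fun hc => hr hc)]; rfl)
        rw [finsum_eq_finsum_mem _ _ hsub, finsum_mem_range (hinj i)]
        have : ∀ t, aux i (ι i t) = lam i * (Qc i hi).toFun t := aux_incl i hi
        rw [finsum_congr this, ← mul_finsum _ _,
          (Qc i hi).sum_one, mul_one]
      · have h1 : aux i = 0 := by rw [haux_def]; exact dif_neg hi
        rw [h1]
        push_neg at hi
        rw [hi]
        exact finsum_zero
    refine ⟨⟨fun s => ∑ i : Fin m, aux i s, ?_, ?_⟩, ?_⟩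
    · refine Set.Finite.subset (Set.finite_iUnion aux_supp) ?_
      intro s hs
      simp only [mem_support] at hs
      by_contra hc
      simp only [Set.mem_iUnion, mem_support, not_exists, not_not] at hc
      exact hs (Finset.sum_eq_zero fun i _ => hc i)
    · rw [finsum_finset_sum_comm Finset.univ aux (fun i _ => aux_supp i)]
      calc ∑ i ∈ Finset.univ, ∑ᶠ s, aux i s = ∑ i : Fin m, lam i :=
            Finset.sum_congr rfl (fun i _ => aux_sum i)
        _ = 1 := lam_sum
    · intro n x e
      set i := cmpnt F hun n e with hi_def
      have he : e ∈ F i n := mem_cmpnt F hun n e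
      have hsCA : ∀ s : Sections f, s.1.app (Opposite.op ⦋n⦌) x = e → sC s = i := by
        intro s hs
        exact sC_of_mem s n x i (by rw [hs]; exact he)
      have hQs : ∀ s ∈ setOf (fun s : Sections f => s.1.app (Opposite.op ⦋n⦌) x = e),
          (∑ j : Fin m, aux j s) = aux i s := by
        intro s hs
        refine Finset.sum_eq_single_of_mem i (Finset.mem_univ i) (fun j _ hj => ?_)
        exact aux_ne j s (by rw [hsCA s hs]; exact fun hc => hj hc.symm)
      rw [finsum_mem_congr rfl hQs]
      symm
      by_cases hi : lam i ≠ 0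
      · have himage : setOf (fun s : Sections f => s.1.app (Opposite.op ⦋n⦌) x = e) =
            ι i '' {t | t.1.app (Opposite.op ⦋n⦌) x = ⟨e, he⟩} := by
          ext s
          constructor
          · intro hs
            obtain ⟨t, rfl⟩ := mem_range_of_sC i s (hsCA s hs)
            exact ⟨t, Subtype.ext hs, rfl⟩
          · rintro ⟨t, ht, rfl⟩
            exact congrArg Subtype.val ht
        calc ∑ᶠ s ∈ setOf (fun s : Sections f => s.1.app (Opposite.op ⦋n⦌) x = e), aux i s
            = ∑ᶠ t ∈ {t | t.1.app (Opposite.op ⦋n⦌) x = ⟨e, he⟩}, aux i (ι i t) := by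
              rw [himage, finsum_mem_image (hinj i).injOn]
          _ = ∑ᶠ t ∈ {t | t.1.app (Opposite.op ⦋n⦌) x = ⟨e, he⟩},
                lam i * (Qc i hi).toFun t :=
              finsum_mem_congr rfl (fun t _ => aux_incl i hi t)
          _ = lam i * ∑ᶠ t ∈ {t | t.1.app (Opposite.op ⦋n⦌) x = ⟨e, he⟩},
                (Qc i hi).toFun t :=
              finsum_mem_mul_left _ _ (Qc i hi).finite_support _
          _ = lam i * ((pc i hi).d n x).toFun ⟨e, he⟩ := by rw [hQc i hi n x ⟨e, he⟩]; rfl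
          _ = lam i * ((p.d n x).toFun e / lam i) := by rw [hpc i hi n x e he]
          _ = (p.d n x).toFun e := by rw [mul_comm, div_mul_cancel₀ _ hi]
      · have hi' := hi
        push_neg at hi'
        have hzero : (p.d n x).toFun e = 0 := by
          have hle := p_le_lam n x e
          rw [← hi_def, hi'] at hle
          exact le_antisymm hle zero_le
        rw [hzero]
        refine finsum_mem_of_eqOn_zero fun s hs => ?_
        have h1 : aux i = 0 := by rw [haux_def]; exact dif_neg hi
        rw [h1]
end

section
/- Let m be a positive integer and X a connected simplicial set. Fix simplices x₁,…,x_k of X (with x_t ∈ X_{n_t}), outcomes y_t : Fin(n_t + 1) → ZMod m, and real numbers B₁,…,B_k, R. If every noncontextual simplicial distribution p on (X, Δ_{Z_m}) satisfies Σ_t B_t · p_{x_t}(y_t) ≤ R, then every noncontextual simplicial distribution P on (X, ⊔_{Z_m} Δ_{Z_m}) satisfies, for every j ∈ ZMod m: Σ_t B_t · P_{x_t}(j, y_t) ≤ R · Σ_{y : Fin(n₁+1) → ZMod m} P_{x₁}(j, y). (Via the identification of sDist(X, ⊔_{Z_m} Δ_{Z_m}) with sDist(CX, Δ_{Z_m}),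 these are the Bell inequalities of the cone scenario produced from those of the original scenario (X, Δ_{Z_m}).) -/
open CategoryTheory Simplicial Opposite
open scoped NNReal BigOperators

universe u

/-- A simplicial distribution on the simplicial scenario `(X, Y)`. -/
structure SDist (X Y : SSet.{u}) : Type u where
  d : ∀ n : ℕ, X _⦋n⦌ → FDist (Y _⦋n⦌)
  compat : ∀ {k n : ℕ} (α : (⦋k⦌ : SimplexCategory) ⟶ ⦋n⦌) (x : X _⦋n⦌) (y : Y _⦋k⦌),
    (d k (X.map α.op x)).toFun y = ∑ᶠ y' ∈ {y' : Y _⦋n⦌ | Y.map α.op y' = y}, (d n x).toFun y'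

/-- The simplicial set `Δ_{ℤ_m}` whose `n`-simplices are functions `Fin (n+1) → ZMod m`. -/
def DeltaZ (m : ℕ) : SSet.{0} where
  obj U := Fin (U.unop.len + 1) → ZMod m
  map α := TypeCat.ofHom fun a => a ∘ α.unop.toOrderHom
  map_id := by intros; rfl
  map_comp := by intros; rfl

/-- The disjoint union `⊔_{ℤ_m} Δ_{ℤ_m}` of `m` copies of `Δ_{ℤ_m}`. -/
def DeltaZSum (m : ℕ) : SSet.{0} where
  obj U := ZMod m × (Fin (U.unop.len + 1) → ZMod m)
  map α := TypeCat.ofHom fun x => (x.1, x.2 ∘ α.unop.toOrderHom)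
  map_id := by intros; rfl
  map_comp := by intros; rfl

instance (m : ℕ) (U : SimplexCategoryᵒᵖ) : AddCommGroup ((DeltaZ m).obj U) :=
  Pi.addCommGroup

/-- A simplicial distribution is noncontextual if it is a mixture of deterministic
distributions. -/
def Noncontextual {X Y : SSet.{u}} (p : SDist X Y) : Prop :=
  ∃ Q : FDist (X ⟶ Y), ∀ (n : ℕ) (x : X _⦋n⦌) (y : Y _⦋n⦌),
    (p.d n x).toFun y = ∑ᶠ φ ∈ ({φ | φ.app (op ⦋n⦌) x = y} : Set (X ⟶ Y)), Q.toFun φ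

/-- A vertex (extreme point) of the convex set of simplicial distributions. -/
def IsVertex {X Y : SSet.{u}} (p : SDist X Y) : Prop :=
  ∀ (q q' : SDist X Y) (t : ℝ), 0 < t → t < 1 →
    (∀ (n : ℕ) (x : X _⦋n⦌) (y : Y _⦋n⦌),
      ((p.d n x).toFun y : ℝ) = t * ((q.d n x).toFun y : ℝ) + (1 - t) * ((q'.d n x).toFun y : ℝ)) →
    q = q'

/-- `q ⪯ p` : the support of `q` is contained in that of `p`. -/
def Pre {X Y : SSet.{u}} (q p : SDist X Y) : Prop :=
  ∀ (n : ℕ) (x : X _⦋n⦌) (y : Y _⦋n⦌), (q.d n x).toFun y ≠ 0 → (p.d n x).toFun y ≠ 0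

lemma finsum_mem_subset_sum {α : Type*} (f : α → ℝ≥0) {t : Finset α}
    (ht : Function.support f ⊆ ↑t) (p : α → Prop) [DecidablePred p] :
    ∑ᶠ i ∈ {i | p i}, f i = ∑ i ∈ t.filter p, f i := by
  apply finsum_mem_eq_sum_of_inter_support_eq
  ext i
  simp only [Set.mem_inter_iff, Set.mem_setOf_eq, Function.mem_support, Finset.coe_filter]
  exact ⟨fun ⟨hp, hf⟩ => ⟨⟨ht hf, hp⟩, hf⟩, fun ⟨⟨_, hp⟩, hf⟩ => ⟨hp, hf⟩⟩

instance (m n : ℕ) [NeZero m] : Fintype ((DeltaZ m) _⦋n⦌) := inferInstanceAs (Fintype (Fin (n+1) → ZMod m))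

noncomputable def theta {m : ℕ} [NeZero m] {X : SSet.{0}} (Q : FDist (X ⟶ DeltaZ m)) :
    SDist X (DeltaZ m) where
  d n xx :=
    { toFun := fun yy => ∑ᶠ φ ∈ ({φ | φ.app (op ⦋n⦌) xx = yy} : Set (X ⟶ DeltaZ m)), Q.toFun φ
      finite_support := Set.toFinite _
      sum_one := by
        classical
        rw [finsum_eq_sum_of_fintype]
        have h : ∀ yy, (∑ᶠ φ ∈ ({φ | φ.app (op ⦋n⦌) xx = yy} : Set (X ⟶ DeltaZ m)), Q.toFun φ)
            = ∑ φ ∈ Q.finite_support.toFinset.filter (fun φ => φ.app (op ⦋n⦌) xx = yy),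
                Q.toFun φ := fun yy =>
          finsum_mem_subset_sum Q.toFun (by simp) _
        simp_rw [h]
        rw [Finset.sum_fiberwise Q.finite_support.toFinset (fun φ => φ.app (op ⦋n⦌) xx) Q.toFun]
        rw [← finsum_eq_sum Q.toFun Q.finite_support, Q.sum_one] }
  compat := by
    intro kk n α xx yy
    classical
    have hsupp : Function.support Q.toFun ⊆ ↑Q.finite_support.toFinset := by simp
    have hnat : ∀ φ : X ⟶ DeltaZ m,
        φ.app (op ⦋kk⦌) (X.map α.op xx) = (DeltaZ m).map α.op (φ.app (op ⦋n⦌) xx) :=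
      fun φ => ConcreteCategory.congr_hom (φ.naturality α.op) xx
    dsimp only
    have hL : ({φ | φ.app (op ⦋kk⦌) (X.map α.op xx) = yy} : Set (X ⟶ DeltaZ m))
        = ({φ | (DeltaZ m).map α.op (φ.app (op ⦋n⦌) xx) = yy} : Set (X ⟶ DeltaZ m)) := by
      ext φ; simp [hnat φ]
    rw [hL, finsum_mem_subset_sum Q.toFun hsupp
      (fun φ => (DeltaZ m).map α.op (φ.app (op ⦋n⦌) xx) = yy)]
    have hR : ∀ y' : (DeltaZ m) _⦋n⦌,
        (∑ᶠ φ ∈ ({φ | φ.app (op ⦋n⦌) xx = y'} : Set (X ⟶ DeltaZ m)), Q.toFun φ)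
          = ∑ φ ∈ Q.finite_support.toFinset.filter (fun φ => φ.app (op ⦋n⦌) xx = y'),
              Q.toFun φ := fun y' => finsum_mem_subset_sum Q.toFun hsupp _
    rw [finsum_mem_subset_sum (t := Finset.univ)
      (fun y' => ∑ᶠ φ ∈ ({φ | φ.app (op ⦋n⦌) xx = y'} : Set (X ⟶ DeltaZ m)), Q.toFun φ)
      (fun _ _ => Finset.mem_coe.mpr (Finset.mem_univ _))
      (fun y' => (DeltaZ m).map α.op y' = yy)]
    rw [Finset.sum_congr rfl (fun y' _ => hR y')]
    symm
    calc ∑ y' ∈ Finset.univ.filter (fun y' => (DeltaZ m).map α.op y' = yy),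
          ∑ φ ∈ Q.finite_support.toFinset.filter (fun φ => φ.app (op ⦋n⦌) xx = y'), Q.toFun φ
        = ∑ y' ∈ Finset.univ.filter (fun y' => (DeltaZ m).map α.op y' = yy),
          ∑ φ ∈ (Q.finite_support.toFinset.filter
              (fun φ => (DeltaZ m).map α.op (φ.app (op ⦋n⦌) xx) = yy)).filter
              (fun φ => φ.app (op ⦋n⦌) xx = y'), Q.toFun φ := by
          refine Finset.sum_congr rfl (fun y' hy' => ?_)
          simp only [Finset.mem_filter, Finset.mem_univ, true_and] at hy'
          congr 1
          rw [Finset.filter_filter]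
          refine Finset.filter_congr (fun φ _ => ?_)
          constructor
          · intro h; exact ⟨by rw [h, hy'], h⟩
          · exact fun h => h.2
      _ = ∑ φ ∈ Q.finite_support.toFinset.filter
              (fun φ => (DeltaZ m).map α.op (φ.app (op ⦋n⦌) xx) = yy), Q.toFun φ :=
          Finset.sum_fiberwise_of_maps_to (fun φ hφ => by
            simp only [Finset.mem_filter, Finset.mem_univ, true_and] at hφ ⊢
            exact hφ.2) Q.toFun

set_option maxHeartbeats 2000000 in
/-- Proposition 4.11: Bell inequalities for the cone scenario. Via the identification of
`sDist(CX, Δ_{ℤ_m})` with `sDist(X, ⊔_{ℤ_m} Δ_{ℤ_m})`, a Bell inequality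
`Σ_t B_t p_{x_t}(y_t) ≤ R` of the scenario `(X, Δ_{ℤ_m})` induces, for every
`j ∈ ℤ_m`, the inequality `Σ_t B_t P_{x_t}(j, y_t) ≤ R · Σ_y P_{x₁}(j, y)` for
noncontextual simplicial distributions `P` on the cone scenario. -/
theorem stmt15 (m : ℕ) [NeZero m] (X : SSet.{0}) (hX : SConnected X)
    (k : ℕ) (hk : 0 < k) (nn : Fin k → ℕ)
    (x : ∀ t : Fin k, X _⦋nn t⦌) (y : ∀ t : Fin k, Fin (nn t + 1) → ZMod m)
    (B : Fin k → ℝ) (R : ℝ)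
    (hBell : ∀ p : SDist X (DeltaZ m), Noncontextual p →
      ∑ t : Fin k, B t * ((p.d (nn t) (x t)).toFun (y t) : ℝ) ≤ R) :
    ∀ P : SDist X (DeltaZSum m), Noncontextual P → ∀ j : ZMod m,
      ∑ t : Fin k, B t * ((P.d (nn t) (x t)).toFun (j, y t) : ℝ)
        ≤ R * ∑ a : Fin (nn ⟨0, hk⟩ + 1) → ZMod m,
            ((P.d (nn ⟨0, hk⟩) (x ⟨0, hk⟩)).toFun (j, a) : ℝ) := by
    classical
  intro P hP j
  obtain ⟨Q, hQ⟩ := hP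
  have hsupp : Function.support Q.toFun ⊆ ↑Q.finite_support.toFinset := by simp
  set T : Finset (X ⟶ DeltaZSum m) := Q.finite_support.toFinset with hT
  set t₀ : Fin k := ⟨0, hk⟩ with ht₀
  set v₀ : X _⦋0⦌ := X.map (SimplexCategory.const ⦋0⦌ ⦋nn t₀⦌ 0).op (x t₀) with hv₀
  set J : (X ⟶ DeltaZSum m) → ZMod m := fun φ => (φ.app (op ⦋0⦌) v₀).1 with hJ
  -- Step 1: the first component is constant
  have hstep : ∀ (φ : X ⟶ DeltaZSum m) (a b : ℕ) (α : (⦋a⦌ : SimplexCategory) ⟶ ⦋b⦌) (z : X _⦋b⦌),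
      (φ.app (op ⦋a⦌) (X.map α.op z)).1 = (φ.app (op ⦋b⦌) z).1 := by
    intro φ a b α z
    have h := ConcreteCategory.congr_hom (φ.naturality α.op) z
    simp only [types_comp_apply] at h
    rw [h]
    rfl
  have hfst : ∀ (φ : X ⟶ DeltaZSum m) (n : ℕ) (z : X _⦋n⦌),
      (φ.app (op ⦋n⦌) z).1 = J φ := by
    intro φ n z
    have hvert : ∀ a b : X _⦋0⦌, Relation.EqvGen (EdgeRel X) a b →
        (φ.app (op ⦋0⦌) a).1 = (φ.app (op ⦋0⦌) b).1 := by
      intro a b h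
      induction h with
      | rel a b hab =>
        obtain ⟨σ, h1, h0⟩ := hab
        rw [← h1, ← h0]
        exact (hstep φ 0 1 (SimplexCategory.δ 1) σ).trans
          (hstep φ 0 1 (SimplexCategory.δ 0) σ).symm
      | refl => rfl
      | symm _ _ _ ih => exact ih.symm
      | trans _ _ _ _ _ ih1 ih2 => exact ih1.trans ih2
    have h1 := hstep φ 0 n (SimplexCategory.const ⦋0⦌ ⦋n⦌ 0) z
    rw [← h1]
    exact hvert _ _ (hX _ _)
    -- second-component simplicial map
  let sec : (X ⟶ DeltaZSum m) → (X ⟶ DeltaZ m) := fun φ =>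
    { app := fun U => TypeCat.ofHom fun z => (φ.app U z).2
      naturality := by
        intro U V f
        ext z
        have h := ConcreteCategory.congr_hom (φ.naturality f) z
        simp only [types_comp_apply] at h ⊢
        exact congrArg Prod.snd h }
  set T0 : Finset (X ⟶ DeltaZSum m) := T.filter (fun φ => J φ = j) with hT0
  set c : ℝ≥0 := ∑ φ ∈ T0, Q.toFun φ with hc
  have claimA : ∀ (n : ℕ) (z : X _⦋n⦌) (a : Fin (n + 1) → ZMod m),
      (P.d n z).toFun (j, a)
        = ∑ φ ∈ T0.filter (fun φ => (φ.app (op ⦋n⦌) z).2 = a), Q.toFun φ := by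
    intro n z a
    rw [hQ n z (j, a)]
    rw [finsum_mem_subset_sum Q.toFun hsupp (fun φ => φ.app (op ⦋n⦌) z = (j, a))]
    rw [hT0, Finset.filter_filter]
    refine Finset.sum_congr (Finset.filter_congr (fun φ _ => ?_)) (fun _ _ => rfl)
    refine Prod.ext_iff.trans ?_
    constructor
    · rintro ⟨h1, h2⟩
      exact ⟨by rw [← hfst φ n z]; exact h1, h2⟩
    · rintro ⟨h1, h2⟩
      exact ⟨by rw [hfst φ n z]; exact h1, h2⟩
  have claimB : ∑ a : Fin (nn t₀ + 1) → ZMod m, (P.d (nn t₀) (x t₀)).toFun (j, a) = c := by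
    calc ∑ a : Fin (nn t₀ + 1) → ZMod m, (P.d (nn t₀) (x t₀)).toFun (j, a)
        = ∑ a : Fin (nn t₀ + 1) → ZMod m, ∑ φ ∈ T0.filter
            (fun φ => (φ.app (op ⦋nn t₀⦌) (x t₀)).2 = a), Q.toFun φ :=
          Finset.sum_congr rfl (fun a _ => claimA _ _ a)
      _ = c := Finset.sum_fiberwise T0 (fun φ => (φ.app (op ⦋nn t₀⦌) (x t₀)).2) Q.toFun
  by_cases hc0 : c = 0
  · have hz : ∀ t : Fin k, (P.d (nn t) (x t)).toFun (j, y t) = 0 := by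
      intro t
      rw [claimA (nn t) (x t) (y t)]
      refine Finset.sum_eq_zero (fun φ hφ => ?_)
      have hφ0 : φ ∈ T0 := Finset.mem_of_mem_filter _ hφ
      exact (Finset.sum_eq_zero_iff).mp (hc.symm.trans hc0) φ hφ0
    have hL : ∑ t : Fin k, B t * ((P.d (nn t) (x t)).toFun (j, y t) : ℝ) = 0 :=
      Finset.sum_eq_zero (fun t _ => by rw [hz t]; simp)
    have hR : ∑ a : Fin (nn t₀ + 1) → ZMod m,
        ((P.d (nn t₀) (x t₀)).toFun (j, a) : ℝ) = (c : ℝ) := by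
      exact_mod_cast claimB
    rw [hL, hR, hc0]
    simp
  · set E : Finset (X ⟶ DeltaZ m) := T0.image sec with hE
    have hQ'supp : ∀ ψ : X ⟶ DeltaZ m,
        c⁻¹ * (∑ φ ∈ T0.filter (fun φ => sec φ = ψ), Q.toFun φ) ≠ 0 → ψ ∈ E := by
      intro ψ hψ
      by_contra hne
      apply hψ
      have hemp : T0.filter (fun φ => sec φ = ψ) = ∅ := by
        refine Finset.filter_eq_empty_iff.mpr ?_
        intro φ hφ hsec
        exact hne (hE ▸ Finset.mem_image.mpr ⟨φ, hφ, hsec⟩)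
      rw [hemp, Finset.sum_empty, mul_zero]
    let Q' : FDist (X ⟶ DeltaZ m) :=
      { toFun := fun ψ => c⁻¹ * ∑ φ ∈ T0.filter (fun φ => sec φ = ψ), Q.toFun φ
        finite_support := Set.Finite.subset E.finite_toSet
          (fun ψ hψ => Finset.mem_coe.mpr (hQ'supp ψ hψ))
        sum_one := by
          rw [finsum_eq_finset_sum_of_support_subset _
            (fun ψ hψ => Finset.mem_coe.mpr (hQ'supp ψ hψ))]
          rw [← Finset.mul_sum]
          rw [Finset.sum_fiberwise_of_maps_to
            (fun φ hφ => Finset.mem_image_of_mem sec hφ) Q.toFun]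
          exact inv_mul_cancel₀ hc0 }
    have hp : ∀ t : Fin k, ((theta Q').d (nn t) (x t)).toFun (y t)
        = c⁻¹ * (P.d (nn t) (x t)).toFun (j, y t) := by
      intro t
      show (∑ᶠ ψ ∈ ({ψ | ψ.app (op ⦋nn t⦌) (x t) = y t} : Set (X ⟶ DeltaZ m)), Q'.toFun ψ) = _
      rw [finsum_mem_subset_sum Q'.toFun (fun ψ hψ => Finset.mem_coe.mpr (hQ'supp ψ hψ))
        (fun ψ => ψ.app (op ⦋nn t⦌) (x t) = y t)]
      rw [claimA (nn t) (x t) (y t)]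
      have hQ't : ∀ ψ, Q'.toFun ψ
          = c⁻¹ * ∑ φ ∈ T0.filter (fun φ => sec φ = ψ), Q.toFun φ := fun _ => rfl
      simp only [hQ't]
      rw [← Finset.mul_sum]
      congr 1
      refine Eq.trans (Finset.sum_congr rfl (fun ψ hψ => ?_))
        (Finset.sum_fiberwise_of_maps_to (g := sec)
          (s := T0.filter (fun φ => (φ.app (op ⦋nn t⦌) (x t)).2 = y t))
          (t := @Finset.filter _ (fun ψ => ψ.app (op ⦋nn t⦌) (x t) = y t)
            (fun a => Classical.propDecidable _) E) (fun φ hφ => by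
            simp only [Finset.mem_filter] at hφ ⊢
            exact ⟨Finset.mem_image_of_mem sec hφ.1, hφ.2⟩) Q.toFun)
      simp only [Finset.mem_filter] at hψ
      congr 1
      conv_rhs => rw [Finset.filter_filter]
      refine Finset.filter_congr (fun φ _ => ?_)
      constructor
      · intro h
        refine ⟨?_, h⟩
        rw [← hψ.2, ← h]
        rfl
      · exact fun h => h.2
    have hbell := hBell (theta Q') ⟨Q', fun _ _ _ => rfl⟩
    have hcR : (c : ℝ) ≠ 0 := by exact_mod_cast hc0
    have hPt : ∀ t : Fin k, ((P.d (nn t) (x t)).toFun (j, y t) : ℝ)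
        = (c : ℝ) * (((theta Q').d (nn t) (x t)).toFun (y t) : ℝ) := by
      intro t
      rw [hp t]
      push_cast
      rw [← mul_assoc, mul_inv_cancel₀ hcR, one_mul]
    have hR2 : ∑ a : Fin (nn t₀ + 1) → ZMod m,
        ((P.d (nn t₀) (x t₀)).toFun (j, a) : ℝ) = (c : ℝ) := by
      exact_mod_cast claimB
    calc ∑ t : Fin k, B t * ((P.d (nn t) (x t)).toFun (j, y t) : ℝ)
        = (c : ℝ) * ∑ t : Fin k, B t * (((theta Q').d (nn t) (x t)).toFun (y t) : ℝ) := by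
          rw [Finset.mul_sum]
          exact Finset.sum_congr rfl (fun t _ => by rw [hPt t]; ring)
      _ ≤ (c : ℝ) * R := mul_le_mul_of_nonneg_left hbell c.coe_nonneg
      _ = R * (c : ℝ) := mul_comm _ _
      _ = R * ∑ a : Fin (nn t₀ + 1) → ZMod m,
            ((P.d (nn t₀) (x t₀)).toFun (j, a) : ℝ) := by rw [hR2]
end
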